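/- Let (𝒰₁,𝒱₁),(𝒰₂,𝒱₂) be a twin cotorsion pair on an exact category 𝓑 with enough projectives and injectives. If the heart 𝓗_t/𝒲_t of the twin cotorsion pair is zero, then 𝓗₁ ⊆ 𝒰₂ and 𝓗₂ ⊆ 𝒱₁, where 𝓗ᵢ is the heart subcategory of the single cotorsion pair (𝒰ᵢ,𝒱ᵢ). -/

import Mathlib

open CategoryTheory Limits ZeroObject

universe v u

variable (C : Type u) [Category.{v} C] [Preadditive C] [HasZeroObject C]
  [HasBinaryBiproducts C]

/-- An exact structure (in the sense of Quillen) on an additive category,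
given by a class of short exact sequences (conflations). -/
structure ExactStructure : Type (max u (v + 1)) where
  /-- the class of short exact sequences -/
  IsSES : ∀ {A B X : C}, (A ⟶ B) → (B ⟶ X) → Prop
  comp_zero : ∀ {A B X : C} {f : A ⟶ B} {g : B ⟶ X}, IsSES f g → f ≫ g = 0
  isKernel : ∀ {A B X : C} {f : A ⟶ B} {g : B ⟶ X} (h : IsSES f g),
      Nonempty (IsLimit (KernelFork.ofι f (comp_zero h)))
  isCokernel : ∀ {A B X : C} {f : A ⟶ B} {g : B ⟶ X} (h : IsSES f g),
      Nonempty (IsColimit (CokernelCofork.ofπ g (comp_zero h)))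
  ses_iso_congr : ∀ {A B X A' B' X' : C} {f : A ⟶ B} {g : B ⟶ X}
      (eA : A' ≅ A) (eB : B ≅ B') (eX : X ≅ X'), IsSES f g →
      IsSES (eA.hom ≫ f ≫ eB.hom) (eB.inv ≫ g ≫ eX.hom)
  id_ses : ∀ A : C, IsSES (𝟙 A) (0 : A ⟶ 0)
  id_ses' : ∀ A : C, IsSES (0 : (0 : C) ⟶ A) (𝟙 A)
  infl_comp : ∀ {A B X : C} (f : A ⟶ B) (f' : B ⟶ X),
      (∃ (Z : C) (g : B ⟶ Z), IsSES f g) → (∃ (Z : C) (g : X ⟶ Z), IsSES f' g) →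
      ∃ (Z : C) (g : X ⟶ Z), IsSES (f ≫ f') g
  defl_comp : ∀ {A B X : C} (g : A ⟶ B) (g' : B ⟶ X),
      (∃ (Z : C) (f : Z ⟶ A), IsSES f g) → (∃ (Z : C) (f : Z ⟶ B), IsSES f g') →
      ∃ (Z : C) (f : Z ⟶ A), IsSES f (g ≫ g')
  pushout_infl : ∀ {A B A' : C} (f : A ⟶ B) (a : A ⟶ A'),
      (∃ (Z : C) (g : B ⟶ Z), IsSES f g) →
      ∃ (P : C) (f' : A' ⟶ P) (b : B ⟶ P), IsPushout a f f' b ∧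
        ∃ (Z : C) (g : P ⟶ Z), IsSES f' g
  pullback_defl : ∀ {B X X' : C} (g : B ⟶ X) (x : X' ⟶ X),
      (∃ (Z : C) (f : Z ⟶ B), IsSES f g) →
      ∃ (P : C) (g' : P ⟶ X') (b : P ⟶ B), IsPullback g' b x g ∧
        ∃ (Z : C) (f : Z ⟶ P), IsSES f g'

variable {C}

namespace ExactStructure

variable (E : ExactStructure C)

/-- inflations (admissible monomorphisms) -/
def Infl {A B : C} (f : A ⟶ B) : Prop := ∃ (X : C) (g : B ⟶ X), E.IsSES f g

/-- deflations (admissible epimorphisms) -/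
def Defl {B X : C} (g : B ⟶ X) : Prop := ∃ (A : C) (f : A ⟶ B), E.IsSES f g

/-- projective objects relative to the exact structure -/
def Proj (P : C) : Prop :=
  ∀ ⦃B X : C⦄ (g : B ⟶ X), E.Defl g → ∀ h : P ⟶ X, ∃ l : P ⟶ B, l ≫ g = h

/-- injective objects relative to the exact structure -/
def Inj (I : C) : Prop :=
  ∀ ⦃A B : C⦄ (f : A ⟶ B), E.Infl f → ∀ h : A ⟶ I, ∃ l : B ⟶ I, f ≫ l = h

/-- the exact category has enough projectives -/
def EnoughProj : Prop :=
  ∀ X : C, ∃ (P K : C) (i : K ⟶ P) (p : P ⟶ X), E.Proj P ∧ E.IsSES i p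

/-- the exact category has enough injectives -/
def EnoughInj : Prop :=
  ∀ X : C, ∃ (I Z : C) (i : X ⟶ I) (p : I ⟶ Z), E.Inj I ∧ E.IsSES i p

end ExactStructure

/-- a morphism factors through an object of a given class of objects -/
def FactorsThru (S : Set C) {X Y : C} (f : X ⟶ Y) : Prop :=
  ∃ (W : C) (a : X ⟶ W) (b : W ⟶ Y), W ∈ S ∧ a ≫ b = f

/-- A cotorsion pair `(𝒰, 𝒱)` on the exact category `(C, E)`. -/
structure CotorsionPair (E : ExactStructure C) where
  U : Set C
  V : Set C
  U_summand : ∀ ⦃X Z : C⦄, Z ∈ U → (∃ (i : X ⟶ Z) (r : Z ⟶ X), i ≫ r = 𝟙 X) → X ∈ U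
  V_summand : ∀ ⦃X Z : C⦄, Z ∈ V → (∃ (i : X ⟶ Z) (r : Z ⟶ X), i ≫ r = 𝟙 X) → X ∈ V
  U_add : ∀ ⦃X Y : C⦄, X ∈ U → Y ∈ U → (X ⊞ Y) ∈ U
  V_add : ∀ ⦃X Y : C⦄, X ∈ V → Y ∈ V → (X ⊞ Y) ∈ V
  ext_vanish : ∀ ⦃A B X : C⦄ {f : A ⟶ B} {g : B ⟶ X}, E.IsSES f g → X ∈ U → A ∈ V →
      ∃ r : B ⟶ A, f ≫ r = 𝟙 A
  res : ∀ B : C, ∃ (VB UB : C) (i : VB ⟶ UB) (p : UB ⟶ B),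
      VB ∈ V ∧ UB ∈ U ∧ E.IsSES i p
  cores : ∀ B : C, ∃ (VB UB : C) (i : B ⟶ VB) (p : VB ⟶ UB),
      VB ∈ V ∧ UB ∈ U ∧ E.IsSES i p

namespace CotorsionPair

variable {E : ExactStructure C} (CP : CotorsionPair E)

/-- `𝒲 = 𝒰 ∩ 𝒱` -/
def W : Set C := CP.U ∩ CP.V

/-- `𝓑⁺`: objects admitting a short exact sequence `V ↣ W ↠ B` with `V ∈ 𝒱`, `W ∈ 𝒲`. -/
def Bplus : Set C :=
  {B | ∃ (V₀ W₀ : C) (i : V₀ ⟶ W₀) (p : W₀ ⟶ B), V₀ ∈ CP.V ∧ W₀ ∈ CP.W ∧ E.IsSES i p}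

/-- `𝓑⁻`: objects admitting a short exact sequence `B ↣ W ↠ U` with `W ∈ 𝒲`, `U ∈ 𝒰`. -/
def Bminus : Set C :=
  {B | ∃ (W₀ U₀ : C) (i : B ⟶ W₀) (p : W₀ ⟶ U₀), W₀ ∈ CP.W ∧ U₀ ∈ CP.U ∧ E.IsSES i p}

/-- the heart subcategory `𝓗 = 𝓑⁺ ∩ 𝓑⁻` -/
def Heart : Set C := CP.Bplus ∩ CP.Bminus

/-- the ideal relation defining the additive quotient `𝓑/𝒲` -/
def wRel : HomRel C := fun {X Y} f g =>
  ∃ (W : C) (a : X ⟶ W) (b : W ⟶ Y), W ∈ CP.W ∧ a ≫ b = f - g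

/-- the quotient category `𝓑/𝒲` -/
abbrev QW := CategoryTheory.Quotient CP.wRel

/-- the quotient functor `π : 𝓑 → 𝓑/𝒲` -/
abbrev qf : C ⥤ CP.QW := Quotient.functor _

/-- `𝓑⁺/𝒲` as a full subcategory of `𝓑/𝒲` -/
abbrev BplusCat := ObjectProperty.FullSubcategory (fun X : CP.QW => X.as ∈ CP.Bplus)

/-- `𝓑⁻/𝒲` as a full subcategory of `𝓑/𝒲` -/
abbrev BminusCat := ObjectProperty.FullSubcategory (fun X : CP.QW => X.as ∈ CP.Bminus)

/-- the heart `𝓗/𝒲` as a full subcategory of `𝓑/𝒲` -/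
abbrev HeartCat := ObjectProperty.FullSubcategory (fun X : CP.QW => X.as ∈ CP.Heart)

/-- the inclusion `𝓑⁺/𝒲 ↪ 𝓑/𝒲` -/
abbrev inclPlus : CP.BplusCat ⥤ CP.QW := ObjectProperty.ι _

/-- the inclusion `𝓑⁻/𝒲 ↪ 𝓑/𝒲` -/
abbrev inclMinus : CP.BminusCat ⥤ CP.QW := ObjectProperty.ι _

/-- the inclusion `𝓗/𝒲 ↪ 𝓑/𝒲` -/
abbrev inclHeart : CP.HeartCat ⥤ CP.QW := ObjectProperty.ι _

/-- `add(𝒰 ∗ 𝒱)`: objects `X` admitting a short exact sequence `U ↣ X ⊕ Y ↠ V`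
with `U ∈ 𝒰`, `V ∈ 𝒱`. -/
def addUV : Set C :=
  {X | ∃ (Y U₀ V₀ : C) (i : U₀ ⟶ X ⊞ Y) (p : X ⊞ Y ⟶ V₀),
    U₀ ∈ CP.U ∧ V₀ ∈ CP.V ∧ E.IsSES i p}

end CotorsionPair


variable (E : ExactStructure C)

/-- `𝒲_t = 𝒱₁ ∩ 𝒰₂` for a twin cotorsion pair -/
def Wt (CP₁ CP₂ : CotorsionPair E) : Set C := CP₁.V ∩ CP₂.U

/-- `𝓑_t⁺` for a twin cotorsion pair -/
def Btplus (CP₁ CP₂ : CotorsionPair E) : Set C :=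
  {B | ∃ (V₀ W₀ : C) (i : V₀ ⟶ W₀) (p : W₀ ⟶ B),
    V₀ ∈ CP₂.V ∧ W₀ ∈ Wt E CP₁ CP₂ ∧ E.IsSES i p}

/-- `𝓑_t⁻` for a twin cotorsion pair -/
def Btminus (CP₁ CP₂ : CotorsionPair E) : Set C :=
  {B | ∃ (W₀ U₀ : C) (i : B ⟶ W₀) (p : W₀ ⟶ U₀),
    W₀ ∈ Wt E CP₁ CP₂ ∧ U₀ ∈ CP₁.U ∧ E.IsSES i p}

/-- the heart `𝓗_t` of a twin cotorsion pair -/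
def Ht (CP₁ CP₂ : CotorsionPair E) : Set C := Btplus E CP₁ CP₂ ∩ Btminus E CP₁ CP₂

variable {E}

section Aux
set_option linter.unusedSectionVars false

variable {A B X A' B' X' Y T : C}

namespace ExactStructure

lemma ses_epi {f : A ⟶ B} {g : B ⟶ X} (h : E.IsSES f g) : Epi g :=
  ⟨fun _ _ hab => Cofork.IsColimit.hom_ext (E.isCokernel h).some (by simpa using hab)⟩

lemma ses_mono {f : A ⟶ B} {g : B ⟶ X} (h : E.IsSES f g) : Mono f :=
  ⟨fun _ _ hab => Fork.IsLimit.hom_ext (E.isKernel h).some (by simpa using hab)⟩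

lemma ses_desc {f : A ⟶ B} {g : B ⟶ X} (h : E.IsSES f g) (t : B ⟶ T) (ht : f ≫ t = 0) :
    ∃ d : X ⟶ T, g ≫ d = t :=
  ⟨(E.isCokernel h).some.desc (CokernelCofork.ofπ t ht),
    (E.isCokernel h).some.fac _ WalkingParallelPair.one⟩

lemma ses_lift {f : A ⟶ B} {g : B ⟶ X} (h : E.IsSES f g) (t : T ⟶ B) (ht : t ≫ g = 0) :
    ∃ d : T ⟶ A, d ≫ f = t :=
  ⟨(E.isKernel h).some.lift (KernelFork.ofι t ht),
    (E.isKernel h).some.fac _ WalkingParallelPair.zero⟩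

lemma ses_iso_mid {f : A ⟶ B} {g : B ⟶ X} (h : E.IsSES f g) (e : B ≅ B') :
    E.IsSES (f ≫ e.hom) (e.inv ≫ g) := by
  simpa using E.ses_iso_congr (Iso.refl A) e (Iso.refl X) h

lemma ses_iso_third {f : A ⟶ B} {g : B ⟶ X} (h : E.IsSES f g) (e : X ≅ X') :
    E.IsSES f (g ≫ e.hom) := by
  simpa using E.ses_iso_congr (Iso.refl A) (Iso.refl B) e h

lemma ses_iso_first {f : A ⟶ B} {g : B ⟶ X} (h : E.IsSES f g) (e : A' ≅ A) :
    E.IsSES (e.hom ≫ f) g := by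
  simpa using E.ses_iso_congr e (Iso.refl B) (Iso.refl X) h

/-- replace the cokernel of a conflation by any other cokernel -/
lemma ses_coker_replace {f : A ⟶ B} {g : B ⟶ X} (h : E.IsSES f g) {c : B ⟶ X'}
    (hc : f ≫ c = 0) (hcol : IsColimit (CokernelCofork.ofπ c hc)) : E.IsSES f c := by
  have he : g ≫ ((E.isCokernel h).some.coconePointUniqueUpToIso hcol).hom = c := by
    simpa using
      IsColimit.comp_coconePointUniqueUpToIso_hom (E.isCokernel h).some hcol
        WalkingParallelPair.one
  have := E.ses_iso_third h ((E.isCokernel h).some.coconePointUniqueUpToIso hcol)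
  rwa [he] at this

/-- replace the kernel of a conflation by any other kernel -/
lemma ses_ker_replace {f : A ⟶ B} {g : B ⟶ X} (h : E.IsSES f g) {k : A' ⟶ B}
    (hk : k ≫ g = 0) (hlim : IsLimit (KernelFork.ofι k hk)) : E.IsSES k g := by
  have he : ((E.isKernel h).some.conePointUniqueUpToIso hlim).hom ≫ k = f := by
    simpa using
      IsLimit.conePointUniqueUpToIso_hom_comp (E.isKernel h).some hlim
        WalkingParallelPair.zero
  have h2 := E.ses_iso_first h ((E.isKernel h).some.conePointUniqueUpToIso hlim).symm
  have heq : ((E.isKernel h).some.conePointUniqueUpToIso hlim).symm.hom ≫ f = k := by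
    have h3 : ((E.isKernel h).some.conePointUniqueUpToIso hlim).symm.hom ≫
        ((E.isKernel h).some.conePointUniqueUpToIso hlim).hom ≫ k = k := by simp
    rw [he] at h3; exact h3
  rwa [heq] at h2

/-- a retraction of the inflation yields a section of the deflation -/
lemma ses_retr_sect {f : A ⟶ B} {g : B ⟶ X} (h : E.IsSES f g) {r : B ⟶ A}
    (hr : f ≫ r = 𝟙 A) : ∃ s : X ⟶ B, s ≫ g = 𝟙 X ∧ g ≫ s = 𝟙 B - r ≫ f := by
  obtain ⟨s, hs⟩ := E.ses_desc h (𝟙 B - r ≫ f) (by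
    simp only [Preadditive.comp_sub, Category.comp_id, ← Category.assoc, hr]
    simp)
  haveI := E.ses_epi h
  refine ⟨s, ?_, hs⟩
  rw [← cancel_epi g, ← Category.assoc, hs]
  simp [Preadditive.sub_comp, Category.assoc, E.comp_zero h]

/-- a section of the deflation yields a retraction of the inflation -/
lemma ses_sect_retr {f : A ⟶ B} {g : B ⟶ X} (h : E.IsSES f g) {s : X ⟶ B}
    (hs : s ≫ g = 𝟙 X) : ∃ r : B ⟶ A, f ≫ r = 𝟙 A ∧ r ≫ f = 𝟙 B - g ≫ s := by
  obtain ⟨r, hr⟩ := E.ses_lift h (𝟙 B - g ≫ s) (by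
    simp [Preadditive.sub_comp, Category.assoc, hs])
  haveI := E.ses_mono h
  refine ⟨r, ?_, hr⟩
  rw [← cancel_mono f, Category.assoc, hr]
  simp only [Preadditive.comp_sub, Category.comp_id, Category.id_comp]
  rw [← Category.assoc, E.comp_zero h]
  simp

/-- a split conflation exhibits the middle object as a biproduct -/
lemma ses_split_iso {f : A ⟶ B} {g : B ⟶ X} (h : E.IsSES f g) {r : B ⟶ A}
    (hr : f ≫ r = 𝟙 A) :
    ∃ φ : B ≅ A ⊞ X, f ≫ φ.hom = biprod.inl ∧ φ.hom ≫ biprod.snd = g := by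
  obtain ⟨s, hs, hgs⟩ := E.ses_retr_sect h hr
  haveI := E.ses_epi h
  have hsr : s ≫ r = 0 := by
    rw [← cancel_epi g, ← Category.assoc, hgs]
    simp only [Preadditive.sub_comp, Category.id_comp, Category.assoc, hr,
      Category.comp_id, comp_zero]
    simp
  refine ⟨⟨biprod.lift r g, biprod.desc f s, ?_, ?_⟩, ?_, by simp⟩
  · rw [biprod.lift_desc, hgs]; abel
  · apply biprod.hom_ext' <;> apply biprod.hom_ext <;>
      simp [hr, hs, hsr, E.comp_zero h]
  · apply biprod.hom_ext <;> simp [hr, E.comp_zero h]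

end ExactStructure

end Aux

section PushPull
set_option linter.unusedSectionVars false
set_option maxHeartbeats 800000

variable {A B X A' B' X' Y T : C}

namespace ExactStructure

/-- pushout of a conflation along an arbitrary morphism -/
lemma pushout_ses {f : A ⟶ B} {g : B ⟶ X} (hfg : E.IsSES f g) (h : A ⟶ A') :
    ∃ (P : C) (f' : A' ⟶ P) (b : B ⟶ P) (g₂ : P ⟶ X),
      IsPushout h f f' b ∧ E.IsSES f' g₂ ∧ b ≫ g₂ = g := by
  obtain ⟨P, f', b, hpo, Z, gz, hz⟩ := E.pushout_infl f h ⟨X, g, hfg⟩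
  have hw : h ≫ (0 : A' ⟶ X) = f ≫ g := by rw [E.comp_zero hfg, Limits.comp_zero]
  set g₂ : P ⟶ X := hpo.desc 0 g hw with hg₂def
  have h1 : f' ≫ g₂ = 0 := hpo.inl_desc _ _ _
  have h2 : b ≫ g₂ = g := hpo.inr_desc _ _ _
  haveI : Epi g₂ := by
    have : Epi (b ≫ g₂) := h2 ▸ E.ses_epi hfg
    exact epi_of_epi b g₂
  have hfac : ∀ s : Cofork f' (0 : A' ⟶ P), f ≫ (b ≫ Cofork.π s) = 0 := fun s => by
    rw [← Category.assoc, ← hpo.w, Category.assoc,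
      (CokernelCofork.condition s : f' ≫ Cofork.π s = 0), Limits.comp_zero]
  choose dd hdd using fun s : Cofork f' (0 : A' ⟶ P) =>
    E.ses_desc hfg (b ≫ Cofork.π s) (hfac s)
  have hfac2 : ∀ s : Cofork f' (0 : A' ⟶ P), g₂ ≫ dd s = Cofork.π s := fun s => by
    apply hpo.hom_ext
    · rw [← Category.assoc, h1, zero_comp,
        (CokernelCofork.condition s : f' ≫ Cofork.π s = 0)]
    · rw [← Category.assoc, h2, hdd]
  have hcol : IsColimit (CokernelCofork.ofπ g₂ h1) :=
    Cofork.IsColimit.mk _ dd (fun s => hfac2 s)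
      (fun s m hm => by
        rw [← cancel_epi g₂, hfac2]
        exact hm)
  exact ⟨P, f', b, g₂, hpo, E.ses_coker_replace hz h1 hcol, h2⟩


/-- pullback of a conflation along an arbitrary morphism -/
lemma pullback_ses {f : A ⟶ B} {g : B ⟶ X} (hfg : E.IsSES f g) (h : X' ⟶ X) :
    ∃ (Q : C) (g' : Q ⟶ X') (b : Q ⟶ B) (f₂ : A ⟶ Q),
      IsPullback g' b h g ∧ E.IsSES f₂ g' ∧ f₂ ≫ b = f := by
  obtain ⟨Q, g', b, hpb, Z, fz, hz⟩ := E.pullback_defl g h ⟨A, f, hfg⟩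
  have hw : (0 : A ⟶ X') ≫ h = f ≫ g := by rw [E.comp_zero hfg, Limits.zero_comp]
  set f₂ : A ⟶ Q := hpb.lift 0 f hw with hf₂def
  have h1 : f₂ ≫ g' = 0 := hpb.lift_fst _ _ _
  have h2 : f₂ ≫ b = f := hpb.lift_snd _ _ _
  haveI : Mono f₂ := by
    have : Mono (f₂ ≫ b) := h2 ▸ E.ses_mono hfg
    exact mono_of_mono f₂ b
  have hfac : ∀ s : Fork g' (0 : Q ⟶ X'), ((Fork.ι s : s.pt ⟶ Q) ≫ b) ≫ g = 0 :=
    fun s => by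
      rw [Category.assoc, ← hpb.w, ← Category.assoc,
        (KernelFork.condition s : (Fork.ι s : s.pt ⟶ Q) ≫ g' = 0), Limits.zero_comp]
  choose dd hdd using fun s : Fork g' (0 : Q ⟶ X') =>
    E.ses_lift hfg ((Fork.ι s : s.pt ⟶ Q) ≫ b) (hfac s)
  have hfac2 : ∀ s : Fork g' (0 : Q ⟶ X'), dd s ≫ f₂ = (Fork.ι s : s.pt ⟶ Q) :=
    fun s => by
      apply hpb.hom_ext
      · rw [Category.assoc, h1, Limits.comp_zero,
          (KernelFork.condition s : (Fork.ι s : s.pt ⟶ Q) ≫ g' = 0)]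
      · rw [Category.assoc, h2, hdd]
  have hlim : IsLimit (KernelFork.ofι f₂ h1) :=
    Fork.IsLimit.mk _ dd (fun s => hfac2 s)
      (fun s m hm => by
        rw [← cancel_mono f₂, hfac2]
        exact hm)
  exact ⟨Q, g', b, f₂, hpb, E.ses_ker_replace hz h1 hlim, h2⟩

/-- Noether lemma: for composable inflations `a : A ↣ B`, `f : B ↣ B'` with conflations
`A ↣ B ↠ X` and `B ↣ B' ↠ X'`, one gets conflations `A ↣ B' ↠ P` and `X ↣ P ↠ X'`. -/
lemma noether_coker {a : A ⟶ B} {d : B ⟶ X} (had : E.IsSES a d)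
    {f : B ⟶ B'} {g : B' ⟶ X'} (hfg : E.IsSES f g) :
    ∃ (P : C) (e : B' ⟶ P) (f'' : X ⟶ P) (g' : P ⟶ X'),
      E.IsSES (a ≫ f) e ∧ E.IsSES f'' g' ∧ d ≫ f'' = f ≫ e ∧ e ≫ g' = g := by
  obtain ⟨P, e, he⟩ := E.infl_comp a f ⟨X, d, had⟩ ⟨X', g, hfg⟩
  haveI := E.ses_epi had
  haveI := E.ses_epi he
  haveI := E.ses_epi hfg
  obtain ⟨f'', hf''⟩ := E.ses_desc had (f ≫ e) (by
    rw [← Category.assoc]; exact E.comp_zero he)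
  obtain ⟨g', hg'⟩ := E.ses_desc he g (by
    rw [Category.assoc]; rw [E.comp_zero hfg, Limits.comp_zero])
  have hw : d ≫ f'' = f ≫ e := hf''
  -- the square (d, f, f'', e) is a pushout
  have hfacpo : ∀ s : PushoutCocone d f, (a ≫ f) ≫ s.inr = 0 := fun s => by
    rw [Category.assoc, ← s.condition, ← Category.assoc, E.comp_zero had,
      Limits.zero_comp]
  choose dd hdd using fun s : PushoutCocone d f => E.ses_desc he s.inr (hfacpo s)
  have hddl : ∀ s : PushoutCocone d f, f'' ≫ dd s = s.inl := fun s => by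
    rw [← cancel_epi d, ← Category.assoc, hw, Category.assoc, hdd, s.condition]
  have hpo : IsPushout d f f'' e := IsPushout.of_isColimit
    (PushoutCocone.IsColimit.mk hw dd hddl hdd
      (fun s m hml hmr => by rw [← cancel_epi e, hdd]; exact hmr))
  obtain ⟨P₀, f₀', b₀, hpo₀, Z₀, g₀, hses₀⟩ := E.pushout_infl f d ⟨X', g, hfg⟩
  set ε : P₀ ≅ P := hpo₀.isColimit.coconePointUniqueUpToIso hpo.isColimit with hεdef
  have hεl : f₀' ≫ ε.hom = f'' := by
    rw [hεdef]
    have hh := hpo₀.isColimit.comp_coconePointUniqueUpToIso_hom hpo.isColimit WalkingSpan.left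
    simp at hh; exact hh
  have hεr : b₀ ≫ ε.hom = e := by
    rw [hεdef]
    have hh := hpo₀.isColimit.comp_coconePointUniqueUpToIso_hom hpo.isColimit WalkingSpan.right
    simp at hh; exact hh
  have hses1 : E.IsSES f'' (ε.inv ≫ g₀) := by
    have := E.ses_iso_mid hses₀ ε
    rwa [hεl] at this
  -- g' is a cokernel of f''
  have h0 : f'' ≫ g' = 0 := by
    rw [← cancel_epi d, ← Category.assoc, hw, Category.assoc, hg',
      E.comp_zero hfg, Limits.comp_zero]
  haveI : Epi g' := by
    have : Epi (e ≫ g') := hg' ▸ E.ses_epi hfg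
    exact epi_of_epi e g'
  have hfacc : ∀ s : Cofork f'' (0 : X ⟶ P), f ≫ (e ≫ Cofork.π s) = 0 :=
    fun s => by
      rw [← Category.assoc, ← hw, Category.assoc,
        (CokernelCofork.condition s : f'' ≫ Cofork.π s = 0), Limits.comp_zero]
  choose cc hcc using fun s : Cofork f'' (0 : X ⟶ P) =>
    E.ses_desc hfg (e ≫ Cofork.π s) (hfacc s)
  have hcc2 : ∀ s : Cofork f'' (0 : X ⟶ P), g' ≫ cc s = Cofork.π s := fun s => by
    rw [← cancel_epi e, ← Category.assoc, hg', hcc]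
  have hcol : IsColimit (CokernelCofork.ofπ g' h0) :=
    Cofork.IsColimit.mk _ cc (fun s => hcc2 s)
      (fun s m hm => by rw [← cancel_epi g', hcc2]; exact hm)
  exact ⟨P, e, f'', g', he, E.ses_coker_replace hses1 h0 hcol, hw, hg'⟩

/-- dual Noether lemma: for composable deflations `g : B ↠ X`, `d : X ↠ X'` with
conflations `A ↣ B ↠ X` and `A' ↣ X ↠ X'`, one gets conflations `T ↣ B ↠ X'` and
`A ↣ T ↠ A'`. -/
lemma noether_ker {f : A ⟶ B} {g : B ⟶ X} (hfg : E.IsSES f g)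
    {a : A' ⟶ X} {d : X ⟶ X'} (had : E.IsSES a d) :
    ∃ (T : C) (k : T ⟶ B) (κ : A ⟶ T) (ν : T ⟶ A'),
      E.IsSES k (g ≫ d) ∧ E.IsSES κ ν ∧ κ ≫ k = f ∧ ν ≫ a = k ≫ g := by
  obtain ⟨T, k, hk⟩ := E.defl_comp g d ⟨A, f, hfg⟩ ⟨A', a, had⟩
  haveI := E.ses_mono had
  haveI := E.ses_mono hk
  haveI := E.ses_mono hfg
  obtain ⟨ν, hν⟩ := E.ses_lift had (k ≫ g) (by
    rw [Category.assoc]; exact E.comp_zero hk)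
  obtain ⟨κ, hκ⟩ := E.ses_lift hk f (by
    rw [← Category.assoc]; rw [E.comp_zero hfg, Limits.zero_comp])
  have hw : ν ≫ a = k ≫ g := hν
  -- the square (ν, k, a, g) is a pullback
  have hfacpb : ∀ s : PullbackCone a g, s.snd ≫ (g ≫ d) = 0 := fun s => by
    rw [← Category.assoc, ← s.condition, Category.assoc, E.comp_zero had,
      Limits.comp_zero]
  choose ll hll using fun s : PullbackCone a g => E.ses_lift hk s.snd (hfacpb s)
  have hllf : ∀ s : PullbackCone a g, ll s ≫ ν = s.fst := fun s => by
    rw [← cancel_mono a, Category.assoc, hw, ← Category.assoc, hll, s.condition]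
  have hpb : IsPullback ν k a g := IsPullback.of_isLimit
    (PullbackCone.IsLimit.mk hw ll hllf hll
      (fun s m hml hmr => by rw [← cancel_mono k, hll]; exact hmr))
  obtain ⟨P₀, g₀', b₀, hpb₀, Z₀, f₀, hses₀⟩ := E.pullback_defl g a ⟨A, f, hfg⟩
  set ε : T ≅ P₀ := hpb.isLimit.conePointUniqueUpToIso hpb₀.isLimit with hεdef
  have hεl : ε.hom ≫ g₀' = ν := by
    rw [hεdef]
    have hh := hpb.isLimit.conePointUniqueUpToIso_hom_comp hpb₀.isLimit WalkingCospan.left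
    simp at hh; exact hh
  have hεr : ε.hom ≫ b₀ = k := by
    rw [hεdef]
    have hh := hpb.isLimit.conePointUniqueUpToIso_hom_comp hpb₀.isLimit WalkingCospan.right
    simp at hh; exact hh
  have hses1 : E.IsSES (f₀ ≫ ε.inv) ν := by
    have := E.ses_iso_mid hses₀ ε.symm
    rw [Iso.symm_hom, Iso.symm_inv] at this
    rwa [hεl] at this
  -- κ is a kernel of ν
  have h0 : κ ≫ ν = 0 := by
    rw [← cancel_mono a, Category.assoc, hw, ← Category.assoc, hκ,
      E.comp_zero hfg, Limits.zero_comp]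
  haveI : Mono κ := by
    have : Mono (κ ≫ k) := hκ ▸ E.ses_mono hfg
    exact mono_of_mono κ k
  have hfack : ∀ s : Fork ν (0 : T ⟶ A'), ((Fork.ι s : s.pt ⟶ T) ≫ k) ≫ g = 0 :=
    fun s => by
      rw [Category.assoc, ← hw, ← Category.assoc,
        (KernelFork.condition s : (Fork.ι s : s.pt ⟶ T) ≫ ν = 0), Limits.zero_comp]
  choose ll2 hll2 using fun s : Fork ν (0 : T ⟶ A') =>
    E.ses_lift hfg ((Fork.ι s : s.pt ⟶ T) ≫ k) (hfack s)
  have hll2b : ∀ s : Fork ν (0 : T ⟶ A'), ll2 s ≫ κ = (Fork.ι s : s.pt ⟶ T) :=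
    fun s => by rw [← cancel_mono k, Category.assoc, hκ, hll2]
  have hlim : IsLimit (KernelFork.ofι κ h0) :=
    Fork.IsLimit.mk _ ll2 (fun s => hll2b s)
      (fun s m hm => by rw [← cancel_mono κ, hll2b]; exact hm)
  exact ⟨T, k, κ, ν, hk, E.ses_ker_replace hses1 h0 hlim, hκ, hw⟩

/-- simultaneous pushout of two conflations with the same kernel -/
lemma pushout_ses_ses {f : A ⟶ B} {g : B ⟶ X} (hfg : E.IsSES f g)
    {h : A ⟶ A'} {k : A' ⟶ Y} (hhk : E.IsSES h k) :
    ∃ (P : C) (f' : A' ⟶ P) (b : B ⟶ P) (g₂ : P ⟶ X) (k₂ : P ⟶ Y),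
      E.IsSES f' g₂ ∧ E.IsSES b k₂ ∧ b ≫ g₂ = g ∧ f' ≫ k₂ = k := by
  obtain ⟨P, f', b, g₂, hpo, hf', hbg⟩ := E.pushout_ses hfg h
  obtain ⟨P₂, h', bb, k₂', hpo₂, hh', hbk⟩ := E.pushout_ses hhk f
  set ε : P₂ ≅ P := hpo₂.isColimit.coconePointUniqueUpToIso hpo.flip.isColimit with hεdef
  have hε1 : h' ≫ ε.hom = b := by
    rw [hεdef]
    have hh := hpo₂.isColimit.comp_coconePointUniqueUpToIso_hom hpo.flip.isColimit
      WalkingSpan.left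
    simp at hh; exact hh
  have hε2 : bb ≫ ε.hom = f' := by
    rw [hεdef]
    have hh := hpo₂.isColimit.comp_coconePointUniqueUpToIso_hom hpo.flip.isColimit
      WalkingSpan.right
    simp at hh; exact hh
  have h2 : E.IsSES b (ε.inv ≫ k₂') := by
    have := E.ses_iso_mid hh' ε
    rwa [hε1] at this
  refine ⟨P, f', b, g₂, ε.inv ≫ k₂', hf', h2, hbg, ?_⟩
  rw [← hε2, Category.assoc, Iso.hom_inv_id_assoc, hbk]

/-- simultaneous pullback of two conflations with the same cokernel -/
lemma pullback_ses_ses {f : A ⟶ B} {g : B ⟶ X} (hfg : E.IsSES f g)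
    {h : A' ⟶ B'} {k : B' ⟶ X} (hhk : E.IsSES h k) :
    ∃ (Q : C) (pB : Q ⟶ B) (pB' : Q ⟶ B') (iA : A ⟶ Q) (iA' : A' ⟶ Q),
      E.IsSES iA pB' ∧ E.IsSES iA' pB ∧ iA ≫ pB = f ∧ iA' ≫ pB' = h := by
  obtain ⟨Q, g', bQ, f₂, hpb, hQ, hfb⟩ := E.pullback_ses hfg k
  obtain ⟨Q₂, k', bQ₂, h₂, hpb₂, hQ₂, hhb⟩ := E.pullback_ses hhk g
  set ε : Q₂ ≅ Q := hpb₂.isLimit.conePointUniqueUpToIso hpb.flip.isLimit with hεdef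
  have hε1 : ε.hom ≫ bQ = k' := by
    rw [hεdef]
    have hh := hpb₂.isLimit.conePointUniqueUpToIso_hom_comp hpb.flip.isLimit
      WalkingCospan.left
    simp at hh; exact hh
  have hε2 : ε.hom ≫ g' = bQ₂ := by
    rw [hεdef]
    have hh := hpb₂.isLimit.conePointUniqueUpToIso_hom_comp hpb.flip.isLimit
      WalkingCospan.right
    simp at hh; exact hh
  have h2 : E.IsSES (h₂ ≫ ε.hom) bQ := by
    have h3 := E.ses_iso_mid hQ₂ ε
    have heq : ε.inv ≫ k' = bQ := by rw [← hε1, Iso.inv_hom_id_assoc]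
    rwa [heq] at h3
  exact ⟨Q, bQ, g', f₂, h₂ ≫ ε.hom, hQ, h2, hfb, by rw [Category.assoc, hε2, hhb]⟩

/-- direct sum of a conflation with an identity (on the left) -/
lemma ses_biprod_map (W : C) {m : A ⟶ B} {n : B ⟶ X} (h : E.IsSES m n) :
    E.IsSES (biprod.map (𝟙 W) m) (biprod.snd ≫ n) := by
  haveI := E.ses_epi h
  have hw : (biprod.inr : A ⟶ W ⊞ A) ≫ biprod.map (𝟙 W) m = m ≫ biprod.inr := by simp
  have hpo : IsPushout (biprod.inr : A ⟶ W ⊞ A) m (biprod.map (𝟙 W) m) biprod.inr :=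
    IsPushout.of_isColimit (PushoutCocone.IsColimit.mk hw
      (fun s => biprod.desc (biprod.inl ≫ s.inl) s.inr)
      (fun s => by
        apply biprod.hom_ext'
        · simp
        · simp [← s.condition])
      (fun s => by simp)
      (fun s m' hml hmr => by
        apply biprod.hom_ext'
        · have h2 : (biprod.inl : W ⟶ W ⊞ B) ≫ m' = biprod.inl ≫ s.inl := by
            calc (biprod.inl : W ⟶ W ⊞ B) ≫ m'
                = ((biprod.inl : W ⟶ W ⊞ A) ≫ biprod.map (𝟙 W) m) ≫ m' := by simp
              _ = biprod.inl ≫ s.inl := by rw [Category.assoc, hml]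
          rw [h2]; simp
        · rw [hmr]; simp))
  obtain ⟨P₀, f₀', b₀, hpo₀, Z₀, g₀, hses₀⟩ :=
    E.pushout_infl m (biprod.inr : A ⟶ W ⊞ A) ⟨X, n, h⟩
  set ε : P₀ ≅ W ⊞ B := hpo₀.isColimit.coconePointUniqueUpToIso hpo.isColimit with hεdef
  have hεl : f₀' ≫ ε.hom = biprod.map (𝟙 W) m := by
    rw [hεdef]
    have hh := hpo₀.isColimit.comp_coconePointUniqueUpToIso_hom hpo.isColimit
      WalkingSpan.left
    simp at hh; exact hh
  have hses1 : E.IsSES (biprod.map (𝟙 W) m) (ε.inv ≫ g₀) := by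
    have := E.ses_iso_mid hses₀ ε
    rwa [hεl] at this
  have h0 : biprod.map (𝟙 W) m ≫ biprod.snd ≫ n = 0 := by
    rw [← Category.assoc, biprod.map_snd, Category.assoc, E.comp_zero h,
      Limits.comp_zero]
  have hker0 : ∀ s : Cofork (biprod.map (𝟙 W) m) (0 : W ⊞ A ⟶ W ⊞ B),
      m ≫ (biprod.inr ≫ Cofork.π s) = 0 := fun s => by
    rw [← Category.assoc, ← biprod.inr_map (𝟙 W) m, Category.assoc,
      (CokernelCofork.condition s : biprod.map (𝟙 W) m ≫ Cofork.π s = 0),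
      Limits.comp_zero]
  choose cc hcc using fun s : Cofork (biprod.map (𝟙 W) m) (0 : W ⊞ A ⟶ W ⊞ B) =>
    E.ses_desc h (biprod.inr ≫ Cofork.π s) (hker0 s)
  have hinl0 : ∀ s : Cofork (biprod.map (𝟙 W) m) (0 : W ⊞ A ⟶ W ⊞ B),
      (biprod.inl : W ⟶ W ⊞ B) ≫ Cofork.π s = 0 := fun s => by
    have h1 : (biprod.inl : W ⟶ W ⊞ A) ≫ biprod.map (𝟙 W) m ≫ Cofork.π s = 0 := by
      rw [(CokernelCofork.condition s : biprod.map (𝟙 W) m ≫ Cofork.π s = 0),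
        Limits.comp_zero]
    rwa [← Category.assoc, biprod.inl_map, Category.id_comp] at h1
  have hfac2 : ∀ s : Cofork (biprod.map (𝟙 W) m) (0 : W ⊞ A ⟶ W ⊞ B),
      (biprod.snd ≫ n) ≫ cc s = Cofork.π s := fun s => by
    apply biprod.hom_ext'
    · simp [hinl0 s]
    · simp [hcc]
  have hcol : IsColimit (CokernelCofork.ofπ (biprod.snd ≫ n) h0) :=
    Cofork.IsColimit.mk _ cc (fun s => hfac2 s)
      (fun s m' hm => by
        have hm' : (biprod.snd ≫ n) ≫ m' = Cofork.π s := hm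
        have h1 : n ≫ m' = n ≫ cc s := by
          calc n ≫ m' = biprod.inr ≫ (biprod.snd ≫ n) ≫ m' := by simp
            _ = biprod.inr ≫ Cofork.π s := by rw [hm']
            _ = n ≫ cc s := (hcc s).symm
        exact (cancel_epi n).mp h1)
  exact E.ses_coker_replace hses1 h0 hcol

/-- direct sum of a conflation with an identity (on the right) -/
lemma ses_biprod_map' (W : C) {m : A ⟶ B} {n : B ⟶ X} (h : E.IsSES m n) :
    E.IsSES (m ≫ biprod.inl) (biprod.map n (𝟙 W)) := by
  haveI := E.ses_mono h
  have hw : (biprod.fst : B ⊞ W ⟶ B) ≫ n = biprod.map n (𝟙 W) ≫ biprod.fst := by simp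
  have hpb : IsPullback (biprod.fst : B ⊞ W ⟶ B) (biprod.map n (𝟙 W)) n biprod.fst :=
    IsPullback.of_isLimit (PullbackCone.IsLimit.mk hw
      (fun s => biprod.lift s.fst (s.snd ≫ biprod.snd))
      (fun s => by simp)
      (fun s => by
        apply biprod.hom_ext
        · rw [Category.assoc, biprod.map_fst, ← Category.assoc, biprod.lift_fst,
            s.condition]
        · rw [Category.assoc, biprod.map_snd, Category.comp_id, biprod.lift_snd])
      (fun s m' hm1 hm2 => by
        apply biprod.hom_ext
        · rw [hm1, biprod.lift_fst]
        · have h3 : m' ≫ biprod.map n (𝟙 W) ≫ biprod.snd = m' ≫ biprod.snd := by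
            rw [biprod.map_snd]; simp
          rw [biprod.lift_snd, ← h3, ← Category.assoc, hm2]))
  obtain ⟨P₀, g₀', b₀, hpb₀, Z₀, f₀, hses₀⟩ :=
    E.pullback_defl n (biprod.fst : X ⊞ W ⟶ X) ⟨A, m, h⟩
  set ε : B ⊞ W ≅ P₀ := hpb.flip.isLimit.conePointUniqueUpToIso hpb₀.isLimit with hεdef
  have hεl : ε.hom ≫ g₀' = biprod.map n (𝟙 W) := by
    rw [hεdef]
    have hh := hpb.flip.isLimit.conePointUniqueUpToIso_hom_comp hpb₀.isLimit
      WalkingCospan.left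
    simp at hh; exact hh
  have hses1 : E.IsSES (f₀ ≫ ε.inv) (biprod.map n (𝟙 W)) := by
    have h3 := E.ses_iso_mid hses₀ ε.symm
    rw [Iso.symm_hom, Iso.symm_inv] at h3
    rwa [hεl] at h3
  have h0 : (m ≫ biprod.inl) ≫ biprod.map n (𝟙 W) = 0 := by
    rw [Category.assoc, biprod.inl_map, ← Category.assoc, E.comp_zero h,
      Limits.zero_comp]
  have hsnd0 : ∀ s : Fork (biprod.map n (𝟙 W)) (0 : B ⊞ W ⟶ X ⊞ W),
      (Fork.ι s : s.pt ⟶ B ⊞ W) ≫ biprod.snd = 0 := fun s => by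
    have h1 : (Fork.ι s : s.pt ⟶ B ⊞ W) ≫ biprod.map n (𝟙 W) ≫ biprod.snd = 0 := by
      rw [← Category.assoc,
        (KernelFork.condition s : (Fork.ι s : s.pt ⟶ B ⊞ W) ≫ biprod.map n (𝟙 W) = 0),
        Limits.zero_comp]
    rw [biprod.map_snd] at h1
    simpa using h1
  have hker : ∀ s : Fork (biprod.map n (𝟙 W)) (0 : B ⊞ W ⟶ X ⊞ W),
      ((Fork.ι s : s.pt ⟶ B ⊞ W) ≫ biprod.fst) ≫ n = 0 := fun s => by
    have h1 : (Fork.ι s : s.pt ⟶ B ⊞ W) ≫ biprod.map n (𝟙 W) ≫ biprod.fst = 0 := by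
      rw [← Category.assoc,
        (KernelFork.condition s : (Fork.ι s : s.pt ⟶ B ⊞ W) ≫ biprod.map n (𝟙 W) = 0),
        Limits.zero_comp]
    rwa [biprod.map_fst, ← Category.assoc] at h1
  choose ll hll using fun s : Fork (biprod.map n (𝟙 W)) (0 : B ⊞ W ⟶ X ⊞ W) =>
    E.ses_lift h ((Fork.ι s : s.pt ⟶ B ⊞ W) ≫ biprod.fst) (hker s)
  have hfac2 : ∀ s : Fork (biprod.map n (𝟙 W)) (0 : B ⊞ W ⟶ X ⊞ W),
      ll s ≫ (m ≫ biprod.inl) = (Fork.ι s : s.pt ⟶ B ⊞ W) := fun s => by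
    apply biprod.hom_ext
    · simp [hll]
    · simp [hsnd0 s]
  have hlim : IsLimit (KernelFork.ofι (m ≫ biprod.inl) h0) :=
    Fork.IsLimit.mk _ ll (fun s => hfac2 s)
      (fun s m' hm => by
        have hm' : m' ≫ (m ≫ biprod.inl) = (Fork.ι s : s.pt ⟶ B ⊞ W) := hm
        have h1 : m' ≫ m = ll s ≫ m := by
          calc m' ≫ m = m' ≫ (m ≫ biprod.inl) ≫ biprod.fst := by simp
            _ = (Fork.ι s : s.pt ⟶ B ⊞ W) ≫ biprod.fst := by rw [← Category.assoc, hm']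
            _ = ll s ≫ m := (hll s).symm
        exact (cancel_mono m).mp h1)
  exact E.ses_ker_replace hses1 h0 hlim

end ExactStructure

end PushPull

section CPLemmas
set_option linter.unusedSectionVars false
set_option maxHeartbeats 1000000

variable {A B X : C}

/-- extension-closedness of the class `𝒰` of a cotorsion pair -/
lemma CotorsionPair.U_ext (CP : CotorsionPair E) {f : A ⟶ B} {g : B ⟶ X}
    (h : E.IsSES f g) (hA : A ∈ CP.U) (hX : X ∈ CP.U) : B ∈ CP.U := by
  obtain ⟨V, Y, f₁, g₁, hV, hY, h₁⟩ := CP.res B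
  obtain ⟨T, k, κ, ν, hk, hκν, hκk, hνa⟩ := E.noether_ker h₁ h
  obtain ⟨ρ, hρ⟩ := CP.ext_vanish hκν hA hV
  obtain ⟨Q, k', b', g₂', hpo, hk', hb'⟩ := E.pushout_ses hk ρ
  obtain ⟨ρ', hρ'⟩ := CP.ext_vanish hk' hX hV
  have hr : f₁ ≫ b' ≫ ρ' = 𝟙 V := by
    rw [← hκk, Category.assoc, ← Category.assoc k b', ← hpo.w, Category.assoc, hρ',
      Category.comp_id, hρ]
  obtain ⟨s, hs, _⟩ := E.ses_retr_sect h₁ hr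
  exact CP.U_summand hY ⟨s, g₁, hs⟩

/-- extension-closedness of the class `𝒱` of a cotorsion pair -/
lemma CotorsionPair.V_ext (CP : CotorsionPair E) {f : A ⟶ B} {g : B ⟶ X}
    (h : E.IsSES f g) (hA : A ∈ CP.V) (hX : X ∈ CP.V) : B ∈ CP.V := by
  obtain ⟨Y, U₂, f₂, g₂, hY, hU₂, h₂⟩ := CP.cores B
  obtain ⟨P, e, f'', g', hPe, hP2, hdf, heg⟩ := E.noether_coker h h₂
  obtain ⟨ρ, hρ⟩ := CP.ext_vanish hP2 hU₂ hX
  obtain ⟨σ, hσ, _⟩ := E.ses_retr_sect hP2 hρ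
  obtain ⟨Q, g'', bQ, f₂'', hpb, hQ, hfb⟩ := E.pullback_ses hPe σ
  obtain ⟨ρ₂, hρ₂⟩ := CP.ext_vanish hQ hU₂ hA
  obtain ⟨τ, hτ, _⟩ := E.ses_retr_sect hQ hρ₂
  have hs : (τ ≫ bQ) ≫ g₂ = 𝟙 U₂ := by
    rw [← heg, Category.assoc, ← Category.assoc bQ e, ← hpb.w, Category.assoc, hσ,
      Category.comp_id, hτ]
  obtain ⟨r, hr, _⟩ := E.ses_sect_retr h₂ hs
  exact CP.V_summand hY ⟨f₂, r, hr⟩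

/-- for a twin cotorsion pair, `𝒱₂ ⊆ 𝒱₁` -/
lemma V2_sub_V1 (CP₁ CP₂ : CotorsionPair E) (htwin : CP₁.U ⊆ CP₂.U) :
    CP₂.V ⊆ CP₁.V := fun Vo hV => by
  obtain ⟨V₁, U₁, i, p, hV₁, hU₁, hses⟩ := CP₁.cores Vo
  obtain ⟨r, hr⟩ := CP₂.ext_vanish hses (htwin hU₁) hV
  exact CP₁.V_summand hV₁ ⟨i, r, hr⟩

/-- key lemma: if the heart of the twin cotorsion pair vanishes, then every object
admitting a conflation `B ↣ W ↠ U` with `W ∈ 𝒲_t` and `U ∈ 𝒰₁` lies in `𝒰₂`. -/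
lemma lem_minus (CP₁ CP₂ : CotorsionPair E) (htwin : CP₁.U ⊆ CP₂.U)
    (hzero : ∀ X ∈ Ht E CP₁ CP₂, FactorsThru (Wt E CP₁ CP₂) (𝟙 X))
    {B W U : C} {j : B ⟶ W} {r : W ⟶ U} (hjr : E.IsSES j r)
    (hW : W ∈ Wt E CP₁ CP₂) (hU : U ∈ CP₁.U) : B ∈ CP₂.U := by
  obtain ⟨V₂, U₂, v, p, hV₂, hU₂, hvp⟩ := CP₂.res B
  obtain ⟨V₁', U₁', m, n, hV₁', hU₁', hmn⟩ := CP₁.cores U₂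
  have hV₁'U : V₁' ∈ CP₂.U := CP₂.U_ext hmn hU₂ (htwin hU₁')
  obtain ⟨Cc, e, ι, c, hvm_e, hιc, hpι, hec⟩ := E.noether_coker hvp hmn
  have hCplus : Cc ∈ Btplus E CP₁ CP₂ :=
    ⟨V₂, V₁', v ≫ m, e, hV₂, ⟨hV₁', hV₁'U⟩, hvm_e⟩
  obtain ⟨D, ι', bW, δ, ε₁, hι'δ, hbWε, hbδ, hι'ε⟩ := E.pushout_ses_ses hjr hιc
  obtain ⟨r_D, hrD⟩ := CP₁.ext_vanish hbWε hU₁' hW.1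
  obtain ⟨φ, hφ1, hφ2⟩ := E.ses_split_iso hbWε hrD
  obtain ⟨V₁s, U₁ss, ms, ns, hV₁s, hU₁ss, hms⟩ := CP₁.cores U₁'
  have hV₁sU : V₁s ∈ CP₂.U := CP₂.U_ext hms (htwin hU₁') (htwin hU₁ss)
  have hbm := E.ses_biprod_map W hms
  have hι'2 : E.IsSES (ι' ≫ φ.hom) (φ.inv ≫ δ) := E.ses_iso_mid hι'δ φ
  obtain ⟨P₂, e₂, f₂'', g₂', hses_big, hsesP, _, _⟩ := E.noether_coker hι'2 hbm
  have hP₂ : P₂ ∈ CP₁.U := CP₁.U_ext hsesP hU hU₁ss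
  have hWV : (W ⊞ V₁s) ∈ Wt E CP₁ CP₂ := ⟨CP₁.V_add hW.1 hV₁s, CP₂.U_add hW.2 hV₁sU⟩
  have hCminus : Cc ∈ Btminus E CP₁ CP₂ :=
    ⟨W ⊞ V₁s, P₂, (ι' ≫ φ.hom) ≫ biprod.map (𝟙 W) ms, e₂, hWV, hP₂, hses_big⟩
  obtain ⟨W₀, sa, sb, hW₀, hab⟩ := hzero Cc ⟨hCplus, hCminus⟩
  have hCU₂ : Cc ∈ CP₂.U := CP₂.U_summand hW₀.2 ⟨sa, sb, hab⟩
  obtain ⟨ρ, hρ⟩ := CP₂.ext_vanish hvm_e hCU₂ hV₂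
  have hr2 : v ≫ m ≫ ρ = 𝟙 V₂ := by rw [← Category.assoc]; exact hρ
  obtain ⟨σ, hσ, _⟩ := E.ses_retr_sect hvp hr2
  exact CP₂.U_summand hU₂ ⟨σ, p, hσ⟩

/-- key lemma: if the heart of the twin cotorsion pair vanishes, then every object
admitting a conflation `V ↣ W ↠ B` with `V ∈ 𝒱₂` and `W ∈ 𝒲_t` lies in `𝒱₁`. -/
lemma lem_plus (CP₁ CP₂ : CotorsionPair E) (htwin : CP₁.U ⊆ CP₂.U)
    (hzero : ∀ X ∈ Ht E CP₁ CP₂, FactorsThru (Wt E CP₁ CP₂) (𝟙 X))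
    {B W V₀ : C} {f₀ : V₀ ⟶ W} {g₀ : W ⟶ B} (hses0 : E.IsSES f₀ g₀)
    (hW : W ∈ Wt E CP₁ CP₂) (hV₀ : V₀ ∈ CP₂.V) : B ∈ CP₁.V := by
  have hsub : CP₂.V ⊆ CP₁.V := V2_sub_V1 CP₁ CP₂ htwin
  obtain ⟨V₁, U₁, v, p, hV₁, hU₁, hvp⟩ := CP₁.cores B
  obtain ⟨V₂', U₂', m, n, hV₂', hU₂', hmn⟩ := CP₂.res V₁
  have hU₂'V : U₂' ∈ CP₁.V := CP₁.V_ext hmn (hsub hV₂') hV₁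
  obtain ⟨T, k, κ, ν, hk, hκν, hκk, hνv⟩ := E.noether_ker hmn hvp
  have hTminus : T ∈ Btminus E CP₁ CP₂ := ⟨U₂', U₁, k, n ≫ p, ⟨hU₂'V, hU₂'⟩, hU₁, hk⟩
  obtain ⟨D, pW, pT, iV₀, iV₂', hses_iV₀, hses_iV₂', hfb, hhb⟩ :=
    E.pullback_ses_ses hses0 hκν
  obtain ⟨ρD, hρD⟩ := CP₂.ext_vanish hses_iV₂' hW.2 hV₂'
  obtain ⟨φ, hφ1, hφ2⟩ := E.ses_split_iso hses_iV₂' hρD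
  obtain ⟨V₂'', U₂'', m'', n'', hV₂'', hU₂'', hm''⟩ := CP₂.res V₂'
  have hU₂''V : U₂'' ∈ CP₁.V := CP₁.V_ext hm'' (hsub hV₂'') (hsub hV₂')
  have hbm := E.ses_biprod_map' W hm''
  have hbm2 : E.IsSES (m'' ≫ biprod.inl) (biprod.map n'' (𝟙 W) ≫ φ.inv) :=
    E.ses_iso_third hbm φ.symm
  obtain ⟨T₂, k₂, κ₂, ν₂, hk₂, hκν₂, _, _⟩ := E.noether_ker hbm2 hses_iV₀
  have hT₂V : T₂ ∈ CP₂.V := CP₂.V_ext hκν₂ hV₂'' hV₀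
  have hUW : (U₂'' ⊞ W) ∈ Wt E CP₁ CP₂ := ⟨CP₁.V_add hU₂''V hW.1, CP₂.U_add hU₂'' hW.2⟩
  have hTplus : T ∈ Btplus E CP₁ CP₂ := ⟨T₂, U₂'' ⊞ W, k₂, _, hT₂V, hUW, hk₂⟩
  obtain ⟨W₀', sa, sb, hW₀', hab⟩ := hzero T ⟨hTplus, hTminus⟩
  have hTV₁ : T ∈ CP₁.V := CP₁.V_summand hW₀'.1 ⟨sa, sb, hab⟩
  obtain ⟨ρ, hρ⟩ := CP₁.ext_vanish hk hU₁ hTV₁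
  obtain ⟨s₂, hs₂, _⟩ := E.ses_retr_sect hk hρ
  have hs : (s₂ ≫ n) ≫ p = 𝟙 U₁ := by rw [Category.assoc]; exact hs₂
  obtain ⟨r, hr, _⟩ := E.ses_sect_retr hvp hs
  exact CP₁.V_summand hV₁ ⟨v, r, hr⟩

end CPLemmas

/-- if the heart `𝓗_t/𝒲_t` of a twin cotorsion pair is zero (every object
of `𝓗_t` becomes zero in `𝓑/𝒲_t`), then `𝓗₁ ⊆ 𝒰₂` and `𝓗₂ ⊆ 𝒱₁`. -/
theorem stmt19 (CP₁ CP₂ : CotorsionPair E) (htwin : CP₁.U ⊆ CP₂.U)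
    (hEP : E.EnoughProj) (hEI : E.EnoughInj)
    (hzero : ∀ X ∈ Ht E CP₁ CP₂, FactorsThru (Wt E CP₁ CP₂) (𝟙 X)) :
    CP₁.Heart ⊆ CP₂.U ∧ CP₂.Heart ⊆ CP₁.V := by
  constructor
  · intro B hB
    obtain ⟨W₀, U₀, i, p, hW₀, hU₀, hses⟩ := hB.2
    exact lem_minus CP₁ CP₂ htwin hzero hses ⟨hW₀.2, htwin hW₀.1⟩ hU₀
  · intro B hB
    obtain ⟨V₀, W₀, i, p, hV₀, hW₀, hses⟩ := hB.1
    exact lem_plus CP₁ CP₂ htwin hzero hses ⟨V2_sub_V1 CP₁ CP₂ htwin hW₀.2, hW₀.1⟩ hV₀
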